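/- Let g : [0,∞) → (0,∞) be a continuous positive integrable function. Then for almost every x > 0 (with respect to Lebesgue measure), g(nx) → 0 as n → ∞ over the natural numbers. -/

import Mathlib

open MeasureTheory Filter

open scoped ENNReal

private lemma lesigne_ptwise {a t : ℝ} (ha : 0 < a) (ht : 0 ≤ t) :
    ∑' n : ℕ, ENNReal.ofReal ((n : ℝ)⁻¹) *
      (Set.Ioo ((n : ℝ) * a) (2 * ((n : ℝ) * a))).indicator (1 : ℝ → ℝ≥0∞) t ≤ 1 := by
  set m := ⌊t / (2 * a)⌋₊ with hm
  set M := ⌊t / a⌋₊ with hM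
  have hsub : ∀ n : ℕ, n ∉ Finset.Ioc m M →
      ENNReal.ofReal ((n : ℝ)⁻¹) *
        (Set.Ioo ((n : ℝ) * a) (2 * ((n : ℝ) * a))).indicator (1 : ℝ → ℝ≥0∞) t = 0 := by
    intro n hn
    by_contra h
    have htmem : t ∈ Set.Ioo ((n : ℝ) * a) (2 * ((n : ℝ) * a)) := by
      by_contra hmem
      rw [Set.indicator_of_notMem hmem, mul_zero] at h
      exact h rfl
    apply hn
    rw [Finset.mem_Ioc]
    constructor
    · rw [hm]
      rw [Nat.floor_lt (by positivity)]
      rw [div_lt_iff₀ (by positivity)]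
      calc t < 2 * ((n : ℝ) * a) := htmem.2
        _ = (n : ℝ) * (2 * a) := by ring
    · rw [hM]
      apply Nat.le_floor
      rw [le_div_iff₀ ha]
      exact htmem.1.le
  rw [tsum_eq_sum hsub]
  have hbound : ∀ n ∈ Finset.Ioc m M,
      ENNReal.ofReal ((n : ℝ)⁻¹) *
        (Set.Ioo ((n : ℝ) * a) (2 * ((n : ℝ) * a))).indicator (1 : ℝ → ℝ≥0∞) t
        ≤ ENNReal.ofReal (((m : ℝ) + 1)⁻¹) := by
    intro n hn
    have hn1 : m + 1 ≤ n := (Finset.mem_Ioc.1 hn).1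
    have hind : (Set.Ioo ((n : ℝ) * a) (2 * ((n : ℝ) * a))).indicator (1 : ℝ → ℝ≥0∞) t ≤ 1 := by
      by_cases hmem : t ∈ Set.Ioo ((n : ℝ) * a) (2 * ((n : ℝ) * a))
      · rw [Set.indicator_of_mem hmem]; rfl
      · rw [Set.indicator_of_notMem hmem]; exact zero_le
    calc ENNReal.ofReal ((n : ℝ)⁻¹) *
        (Set.Ioo ((n : ℝ) * a) (2 * ((n : ℝ) * a))).indicator (1 : ℝ → ℝ≥0∞) t
        ≤ ENNReal.ofReal ((n : ℝ)⁻¹) * 1 := by gcongr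
      _ = ENNReal.ofReal ((n : ℝ)⁻¹) := mul_one _
      _ ≤ ENNReal.ofReal (((m : ℝ) + 1)⁻¹) := by
          apply ENNReal.ofReal_le_ofReal
          apply inv_anti₀ (by positivity)
          exact_mod_cast hn1
  calc (∑ n ∈ Finset.Ioc m M, ENNReal.ofReal ((n : ℝ)⁻¹) *
        (Set.Ioo ((n : ℝ) * a) (2 * ((n : ℝ) * a))).indicator (1 : ℝ → ℝ≥0∞) t)
      ≤ ∑ _n ∈ Finset.Ioc m M, ENNReal.ofReal (((m : ℝ) + 1)⁻¹) :=
        Finset.sum_le_sum hbound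
    _ = (M - m : ℕ) * ENNReal.ofReal (((m : ℝ) + 1)⁻¹) := by
        rw [Finset.sum_const, Nat.card_Ioc, nsmul_eq_mul]
    _ ≤ (m + 1 : ℕ) * ENNReal.ofReal (((m : ℝ) + 1)⁻¹) := by
        gcongr
        have hM2 : M ≤ 2 * m + 1 := by
          have h1 : t / a < ((2 * m + 2 : ℕ) : ℝ) := by
            have h2 : t / (2 * a) < (m : ℝ) + 1 := Nat.lt_floor_add_one _
            have h3 : t / a = 2 * (t / (2 * a)) := by field_simp
            push_cast
            linarith
          have := (Nat.floor_lt (div_nonneg ht ha.le)).2 h1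
          omega
        have : M - m ≤ m + 1 := by omega
        exact_mod_cast this
    _ = 1 := by
        rw [← ENNReal.ofReal_natCast, ← ENNReal.ofReal_mul (by positivity)]
        rw [show ((m + 1 : ℕ) : ℝ) = (m : ℝ) + 1 by push_cast; ring]
        rw [mul_inv_cancel₀ (by positivity), ENNReal.ofReal_one]

set_option maxHeartbeats 1000000 in
private lemma lesigne_sum_bound {a : ℝ} (ha : 0 < a) {E : Set ℝ} (hE : MeasurableSet E)
    (hE0 : E ⊆ Set.Ici 0) :
    ∑' n : ℕ, ENNReal.ofReal ((n : ℝ)⁻¹) *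
      volume (E ∩ Set.Ioo ((n : ℝ) * a) (2 * ((n : ℝ) * a))) ≤ volume E := by
  have h1 : ∀ n : ℕ, volume (E ∩ Set.Ioo ((n : ℝ) * a) (2 * ((n : ℝ) * a)))
      = ∫⁻ t, (Set.Ioo ((n : ℝ) * a) (2 * ((n : ℝ) * a))).indicator (1 : ℝ → ℝ≥0∞) t
          ∂(volume.restrict E) := by
    intro n
    rw [lintegral_indicator_one measurableSet_Ioo, Measure.restrict_apply measurableSet_Ioo,
      Set.inter_comm]
  calc ∑' n : ℕ, ENNReal.ofReal ((n : ℝ)⁻¹) *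
        volume (E ∩ Set.Ioo ((n : ℝ) * a) (2 * ((n : ℝ) * a)))
      = ∑' n : ℕ, ∫⁻ t, ENNReal.ofReal ((n : ℝ)⁻¹) *
          (Set.Ioo ((n : ℝ) * a) (2 * ((n : ℝ) * a))).indicator (1 : ℝ → ℝ≥0∞) t
          ∂(volume.restrict E) := by
        refine tsum_congr fun n => ?_
        rw [h1, lintegral_const_mul _ (measurable_one.indicator measurableSet_Ioo)]
    _ = ∫⁻ t, ∑' n : ℕ, ENNReal.ofReal ((n : ℝ)⁻¹) *
          (Set.Ioo ((n : ℝ) * a) (2 * ((n : ℝ) * a))).indicator (1 : ℝ → ℝ≥0∞) t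
          ∂(volume.restrict E) :=
        (lintegral_tsum fun n =>
          ((measurable_one.indicator measurableSet_Ioo).const_mul _).aemeasurable).symm
    _ ≤ ∫⁻ _t, 1 ∂(volume.restrict E) := by
        refine lintegral_mono_ae ?_
        filter_upwards [ae_restrict_mem hE] with t htE
        exact lesigne_ptwise ha (hE0 htE)
    _ = volume E := by rw [lintegral_one, Measure.restrict_apply_univ]

set_option maxHeartbeats 1000000 in
private lemma lesigne_key (g : ℝ → ℝ) (hcont : Continuous g)
    (hint : IntegrableOn g (Set.Ici 0)) {a ε : ℝ} (ha : 0 < a) (hε : 0 < ε) :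
    ∀ᵐ x : ℝ, x ∈ Set.Ioo a (2 * a) → ∀ᶠ n : ℕ in atTop, g (n * x) < ε := by
  set E := {t : ℝ | ε ≤ g t} ∩ Set.Ici a with hEdef
  have hEmeas : MeasurableSet E :=
    (isClosed_le continuous_const hcont).measurableSet.inter measurableSet_Ici
  have hE0 : E ⊆ Set.Ici 0 := fun t ht => le_trans ha.le ht.2
  have hEfin : volume E < ∞ := by
    have h2 := hint.measure_ge_lt_top hε
    rw [Measure.restrict_apply ((isClosed_le continuous_const hcont).measurableSet)] at h2
    refine lt_of_le_of_lt (measure_mono ?_) h2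
    exact Set.inter_subset_inter_right _ (Set.Ici_subset_Ici.2 ha.le)
  set s : ℕ → Set ℝ := fun n => Set.Ioo a (2 * a) ∩ {x | ε ≤ g (n * x)} with hs
  have hμs : ∀ n : ℕ, 0 < n → volume (s n) ≤
      ENNReal.ofReal ((n : ℝ)⁻¹) * volume (E ∩ Set.Ioo ((n : ℝ) * a) (2 * ((n : ℝ) * a))) := by
    intro n hn
    have hn0 : (0 : ℝ) < n := by exact_mod_cast hn
    have hsub : s n ⊆ ((n : ℝ) * ·) ⁻¹' (E ∩ Set.Ioo ((n : ℝ) * a) (2 * ((n : ℝ) * a))) := by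
      rintro x ⟨⟨hx1, hx2⟩, hx3⟩
      have hn1 : (1 : ℝ) ≤ n := by exact_mod_cast hn
      simp only [Set.mem_preimage, Set.mem_inter_iff, Set.mem_Ioo, Set.mem_setOf_eq,
        Set.mem_Ici, hEdef]
      have ha1 : a ≤ (n : ℝ) * x := by nlinarith
      exact ⟨⟨hx3, ha1⟩, by nlinarith, by nlinarith⟩
    calc volume (s n) ≤ volume (((n : ℝ) * ·) ⁻¹' (E ∩ Set.Ioo ((n : ℝ) * a) (2 * ((n : ℝ) * a)))) :=
          measure_mono hsub
      _ = ENNReal.ofReal |((n : ℝ))⁻¹| *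
          volume (E ∩ Set.Ioo ((n : ℝ) * a) (2 * ((n : ℝ) * a))) :=
          Real.volume_preimage_mul_left hn0.ne' _
      _ = ENNReal.ofReal ((n : ℝ)⁻¹) *
          volume (E ∩ Set.Ioo ((n : ℝ) * a) (2 * ((n : ℝ) * a))) := by
          rw [abs_of_nonneg (by positivity)]
  have htsum : ∑' n : ℕ, volume (s n) ≠ ∞ := by
    have h0 : ∑' n : ℕ, volume (s n) = volume (s 0) + ∑' n : ℕ, volume (s (n + 1)) :=
      tsum_eq_zero_add' ENNReal.summable
    have hb : ∑' n : ℕ, volume (s (n + 1)) ≤ volume E := by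
      calc ∑' n : ℕ, volume (s (n + 1))
          ≤ ∑' n : ℕ, ENNReal.ofReal (((n + 1 : ℕ) : ℝ)⁻¹) *
            volume (E ∩ Set.Ioo (((n + 1 : ℕ) : ℝ) * a) (2 * (((n + 1 : ℕ) : ℝ) * a))) :=
            ENNReal.tsum_le_tsum fun n => hμs (n + 1) n.succ_pos
        _ ≤ ∑' n : ℕ, ENNReal.ofReal (((n : ℕ) : ℝ)⁻¹) *
            volume (E ∩ Set.Ioo (((n : ℕ) : ℝ) * a) (2 * (((n : ℕ) : ℝ) * a))) := by
            rw [tsum_eq_zero_add' (f := fun n : ℕ => ENNReal.ofReal (((n : ℕ) : ℝ)⁻¹) *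
              volume (E ∩ Set.Ioo (((n : ℕ) : ℝ) * a) (2 * (((n : ℕ) : ℝ) * a))))
              ENNReal.summable]
            exact le_add_self
        _ ≤ volume E := lesigne_sum_bound ha hEmeas hE0
    have h0fin : volume (s 0) < ∞ := by
      calc volume (s 0) ≤ volume (Set.Ioo a (2 * a)) := measure_mono Set.inter_subset_left
        _ < ∞ := by rw [Real.volume_Ioo]; exact ENNReal.ofReal_lt_top
    rw [h0]
    exact (ENNReal.add_lt_top.2 ⟨h0fin, lt_of_le_of_lt hb hEfin⟩).ne
  filter_upwards [ae_eventually_notMem htsum] with x hx hxmem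
  exact hx.mono fun n hn => lt_of_not_ge fun hge => hn ⟨hxmem, hge⟩

theorem lesigne_lemma
    (g : ℝ → ℝ) (hcont : Continuous g)
    (hpos : ∀ t ≥ (0:ℝ), 0 < g t)
    (hint : IntegrableOn g (Set.Ici 0)) :
    ∀ᵐ x ∂(volume.restrict (Set.Ioi (0:ℝ))),
      Tendsto (fun n : ℕ => g (n * x)) atTop (nhds 0) := by
  rw [ae_restrict_iff' measurableSet_Ioi]
  have H : ∀ᵐ x : ℝ, ∀ (q : ℚ) (k : ℕ), 0 < (q : ℝ) →
      (x ∈ Set.Ioo (q : ℝ) (2 * q) → ∀ᶠ n : ℕ in atTop, g (n * x) < 1 / ((k : ℝ) + 1)) := by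
    rw [ae_all_iff]
    intro q
    rw [ae_all_iff]
    intro k
    by_cases hq : 0 < (q : ℝ)
    · filter_upwards [lesigne_key g hcont hint hq
        (show (0:ℝ) < 1 / ((k : ℝ) + 1) by positivity)] with x hx _ hmem
      exact hx hmem
    · exact Eventually.of_forall fun x h => absurd h hq
  filter_upwards [H] with x hx hx0
  have hx0' : (0 : ℝ) < x := hx0
  refine tendsto_order.2 ⟨fun l hl => ?_, fun u hu => ?_⟩
  · refine Eventually.of_forall fun n => lt_trans hl (hpos _ ?_)
    exact mul_nonneg (Nat.cast_nonneg n) hx0'.le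
  · obtain ⟨k, hk⟩ := exists_nat_one_div_lt hu
    obtain ⟨q, hq1, hq2⟩ := exists_rat_btwn (half_lt_self hx0')
    have hq0 : 0 < (q : ℝ) := lt_trans (half_pos hx0') hq1
    have hmem : x ∈ Set.Ioo (q : ℝ) (2 * q) := ⟨hq2, by linarith⟩
    exact (hx q k hq0 hmem).mono fun n hn => lt_trans hn hk
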